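/- Let V be a 2m-dimensional rational vector space, m ≥ 3, with basis dx_1,...,dx_m,dy_1,...,dy_m, and suppose W ⊆ Λ²V is a subspace containing w = Σ_{j=1}^m dx_j∧dy_j and all elements dx_j∧dx_l − dy_j∧dy_l and dx_j∧dy_l − dx_l∧dy_j for j < l, and closed under the operation of replacing w by w + (dx_k∧dy_l − dx_l∧dy_k) and applying the same two families of relations in the new basis (dx'_j = dx_j, dy'_k = dy_k + dy_l, dy'_l = dy_l − dy_k, dy'_j = dy_j otherwise). Then W contains dx_j∧dy_k for all j ≠ k and dy_j∧dy_k for all j ≠ k. -/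

import Mathlib

open ExteriorAlgebra

/-- steps (***) and (****) of Campana's proof. `W ⊆ Λ²V` contains
`w = Σ_j dx_j∧dy_j`, the relations `dx_j∧dx_l − dy_j∧dy_l` and `dx_j∧dy_l − dx_l∧dy_j`
(`j < l`), and is closed under passing to the modified bases `dy'` (for each `k ≠ l`:
`dy'_k = dy_k + dy_l`, `dy'_l = dy_l − dy_k`, `dy'_j = dy_j` otherwise, `dx'_j = dx_j`),
i.e. contains the same two families of relations in each such new basis. Then `W`
contains `dx_j∧dy_k` and `dy_j∧dy_k` for all `j ≠ k`. -/
theorem stmt18 {V : Type*} [AddCommGroup V] [Module ℚ V] (m : ℕ) (hm : 3 ≤ m)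
    (b : Module.Basis (Fin m ⊕ Fin m) ℚ V) (dx dy : Fin m → V)
    (hdx : ∀ j, dx j = b (Sum.inl j)) (hdy : ∀ j, dy j = b (Sum.inr j))
    (dy' : Fin m → Fin m → Fin m → V)
    (hdy' : ∀ k l j, dy' k l j =
      if j = k then dy k + dy l else if j = l then dy l - dy k else dy j)
    (W : Submodule ℚ (ExteriorAlgebra ℚ V)) (hW : W ≤ ⋀[ℚ]^2 V)
    (hw : (∑ j : Fin m, ι ℚ (dx j) * ι ℚ (dy j)) ∈ W)
    (h1 : ∀ j l : Fin m, j < l →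
      ι ℚ (dx j) * ι ℚ (dx l) - ι ℚ (dy j) * ι ℚ (dy l) ∈ W)
    (h2 : ∀ j l : Fin m, j < l →
      ι ℚ (dx j) * ι ℚ (dy l) - ι ℚ (dx l) * ι ℚ (dy j) ∈ W)
    (hw' : ∀ k l : Fin m, k ≠ l →
      (∑ j : Fin m, ι ℚ (dx j) * ι ℚ (dy' k l j)) ∈ W)
    (h1' : ∀ k l : Fin m, k ≠ l → ∀ p q : Fin m, p < q →
      ι ℚ (dx p) * ι ℚ (dx q) - ι ℚ (dy' k l p) * ι ℚ (dy' k l q) ∈ W)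
    (h2' : ∀ k l : Fin m, k ≠ l → ∀ p q : Fin m, p < q →
      ι ℚ (dx p) * ι ℚ (dy' k l q) - ι ℚ (dx q) * ι ℚ (dy' k l p) ∈ W) :
    ∀ j k : Fin m, j ≠ k →
      ι ℚ (dx j) * ι ℚ (dy k) ∈ W ∧ ι ℚ (dy j) * ι ℚ (dy k) ∈ W := by
  intro j k hjk
  -- find an auxiliary index c distinct from j and k
  have hne : (({j, k} : Finset (Fin m))ᶜ).Nonempty := by
    rw [← Finset.card_pos, Finset.card_compl]
    have h2 : ({j, k} : Finset (Fin m)).card ≤ 2 :=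
      (Finset.card_insert_le _ _).trans (by simp)
    have : Fintype.card (Fin m) = m := Fintype.card_fin m
    omega
  obtain ⟨c, hc⟩ := hne
  simp only [Finset.mem_compl, Finset.mem_insert, Finset.mem_singleton, not_or] at hc
  obtain ⟨hcj, hck⟩ := hc
  have hdc : dy' c k c = dy c + dy k := by simp [hdy' c k c]
  have hdj : dy' c k j = dy j := by
    simp [hdy' c k j, (Ne.symm hcj : j ≠ c), hjk]
  rcases lt_or_gt_of_ne hcj with h | h
  · -- c < j
    have hX := h2' c k hck c j h
    have hY := h1' c k hck c j h
    rw [hdc, hdj, map_add] at hX hY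
    have hB := h2 c j h
    have hA := h1 c j h
    constructor
    · have := W.sub_mem hB hX
      have heq : ι ℚ (dx c) * ι ℚ (dy j) - ι ℚ (dx j) * ι ℚ (dy c) -
          (ι ℚ (dx c) * ι ℚ (dy j) - ι ℚ (dx j) * (ι ℚ (dy c) + ι ℚ (dy k))) =
          ι ℚ (dx j) * ι ℚ (dy k) := by noncomm_ring
      rwa [heq] at this
    · have := W.sub_mem hA hY
      have heq : ι ℚ (dx c) * ι ℚ (dx j) - ι ℚ (dy c) * ι ℚ (dy j) -
          (ι ℚ (dx c) * ι ℚ (dx j) - (ι ℚ (dy c) + ι ℚ (dy k)) * ι ℚ (dy j)) =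
          ι ℚ (dy k) * ι ℚ (dy j) := by noncomm_ring
      rw [heq] at this
      have hswap : ι ℚ (dy j) * ι ℚ (dy k) = -(ι ℚ (dy k) * ι ℚ (dy j)) := by
        have := ι_add_mul_swap (R := ℚ) (dy k) (dy j)
        linear_combination (norm := noncomm_ring) this
      rw [hswap]
      exact W.neg_mem this
  · -- j < c
    have hX := h2' c k hck j c h
    have hY := h1' c k hck j c h
    rw [hdc, hdj, map_add] at hX hY
    have hB := h2 j c h
    have hA := h1 j c h
    constructor
    · have := W.sub_mem hX hB
      have heq : ι ℚ (dx j) * (ι ℚ (dy c) + ι ℚ (dy k)) - ι ℚ (dx c) * ι ℚ (dy j) -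
          (ι ℚ (dx j) * ι ℚ (dy c) - ι ℚ (dx c) * ι ℚ (dy j)) =
          ι ℚ (dx j) * ι ℚ (dy k) := by noncomm_ring
      rwa [heq] at this
    · have := W.sub_mem hA hY
      have heq : ι ℚ (dx j) * ι ℚ (dx c) - ι ℚ (dy j) * ι ℚ (dy c) -
          (ι ℚ (dx j) * ι ℚ (dx c) - ι ℚ (dy j) * (ι ℚ (dy c) + ι ℚ (dy k))) =
          ι ℚ (dy j) * ι ℚ (dy k) := by noncomm_ring
      rwa [heq] at this
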